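/- Let ψ : P → Q be the unique ℂ-algebra homomorphism with ψ(ℓ⁽ⁱ⁾) = D_Q^i((t⁽⁰⁾)²) and ψ(w⁽ⁱ⁾) = D_Q^i((t⁽⁰⁾)³) for all i ≥ 0. Then the kernel of ψ equals the radical of the ideal I generated by {f⁽ⁱ⁾ : i ≥ 0}, where f⁽ⁱ⁾ = Dⁱ((w⁽⁰⁾)² − (ℓ⁽⁰⁾)³). Equivalently, for p ∈ P one has ψ(p) = 0 if and only if pⁿ ∈ I for some n ≥ 1. -/

import Mathlib

open MvPolynomial

noncomputable section

/-- The polynomial ring `P = ℂ[ℓ⁽⁰⁾, ℓ⁽¹⁾, …, w⁽⁰⁾, w⁽¹⁾, …]`: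
variables are indexed by `Fin 2 × ℕ`, where `(0, i)` is `ℓ⁽ⁱ⁾` and `(1, i)` is `w⁽ⁱ⁾`. -/
abbrev P : Type := MvPolynomial (Fin 2 × ℕ) ℂ

/-- The unique ℂ-linear derivation `D : P → P` with `D(ℓ⁽ⁱ⁾) = ℓ⁽ⁱ⁺¹⁾`, `D(w⁽ⁱ⁾) = w⁽ⁱ⁺¹⁾`. -/
def D : Derivation ℂ P P :=
  MvPolynomial.mkDerivation ℂ (fun p : Fin 2 × ℕ => (X (p.1, p.2 + 1) : P))

/-- `ℓ⁽ⁱ⁾` -/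
def lv (i : ℕ) : P := X (0, i)

/-- `w⁽ⁱ⁾` -/
def wv (i : ℕ) : P := X (1, i)

/-- The polynomial ring `Q = ℂ[t⁽⁰⁾, t⁽¹⁾, …]`. -/
abbrev Q : Type := MvPolynomial ℕ ℂ

/-- The unique ℂ-linear derivation `D_Q : Q → Q` with `D_Q(t⁽ⁱ⁾) = t⁽ⁱ⁺¹⁾`. -/
def DQ : Derivation ℂ Q Q :=
  MvPolynomial.mkDerivation ℂ (fun i : ℕ => (X (i + 1) : Q))

/-- `t⁽⁰⁾` -/
def t : Q := X 0

/-- `f⁽ⁱ⁾ = Dⁱ((w⁽⁰⁾)² − (ℓ⁽⁰⁾)³)`. -/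
def fd (i : ℕ) : P := (⇑D)^[i] (wv 0 ^ 2 - lv 0 ^ 3)

/-- The ideal `I` generated by all `f⁽ⁱ⁾`, `i ≥ 0`. -/
def I : Ideal P := Ideal.span (Set.range fd)

/-- The ℂ-algebra homomorphism `ψ : P → Q` with `ψ(ℓ⁽ⁱ⁾) = D_Q^i((t⁽⁰⁾)²)` and
`ψ(w⁽ⁱ⁾) = D_Q^i((t⁽⁰⁾)³)`, induced by the parametrization `t ↦ (t², t³)`
of the cuspidal cubic. -/
def ψ : P →ₐ[ℂ] Q :=
  aeval (fun p : Fin 2 × ℕ => (⇑DQ)^[p.2] (if p.1 = 0 then t ^ 2 else t ^ 3))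

set_option maxHeartbeats 1000000
set_option synthInstance.maxHeartbeats 400000

/-! ### Auxiliary lemmas -/

section Aux

/-- An algebra hom out of a polynomial ring intertwines derivations as soon as it does so
on the generators. -/
lemma comm_apply {σ R A : Type*} [CommRing R] [Algebra ℂ R] [CommRing A] [Algebra A R]
    (g : MvPolynomial σ ℂ →ₐ[ℂ] R) (Dp : Derivation ℂ (MvPolynomial σ ℂ) (MvPolynomial σ ℂ))
    (d : Derivation A R R) (h0 : ∀ c : ℂ, d (algebraMap ℂ R c) = 0)
    (h : ∀ i, g (Dp (MvPolynomial.X i)) = d (g (MvPolynomial.X i)))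
    (p : MvPolynomial σ ℂ) : g (Dp p) = d (g p) := by
  induction p using MvPolynomial.induction_on with
  | C c =>
    rw [show (C c : MvPolynomial σ ℂ) = algebraMap ℂ _ c from rfl, Derivation.map_algebraMap,
      map_zero, AlgHom.commutes, h0]
  | add p q hp hq => rw [map_add, map_add, map_add, map_add, hp, hq]
  | mul_X p i hp =>
    rw [Derivation.leibniz, smul_eq_mul, smul_eq_mul, map_add, map_mul, map_mul, map_mul,
      Derivation.leibniz, smul_eq_mul, smul_eq_mul, hp, h]

lemma comm_iter {σ R A : Type*} [CommRing R] [Algebra ℂ R] [CommRing A] [Algebra A R]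
    (g : MvPolynomial σ ℂ →ₐ[ℂ] R) (Dp : Derivation ℂ (MvPolynomial σ ℂ) (MvPolynomial σ ℂ))
    (d : Derivation A R R) (h0 : ∀ c : ℂ, d (algebraMap ℂ R c) = 0)
    (h : ∀ i, g (Dp (MvPolynomial.X i)) = d (g (MvPolynomial.X i))) (n : ℕ)
    (p : MvPolynomial σ ℂ) : g ((⇑Dp)^[n] p) = (⇑d)^[n] (g p) := by
  induction n generalizing p with
  | zero => rfl
  | succ n ih =>
    rw [Function.iterate_succ_apply, ih, comm_apply g Dp d h0 h, Function.iterate_succ_apply]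

open PowerSeries in
lemma const_iter {K : Type*} [Field K] (F : K⟦X⟧) (n : ℕ) :
    PowerSeries.constantCoeff (R := K) ((⇑(d⁄dX K))^[n] F) = (n.factorial : K) * PowerSeries.coeff n F := by
  induction n generalizing F with
  | zero => simp
  | succ n ih =>
    rw [Function.iterate_succ_apply, ih, coeff_derivative, Nat.factorial_succ]
    push_cast
    ring

open PowerSeries in
lemma sq_root {K : Type*} [Field K] (L W : K⟦X⟧) (h : W ^ 2 = L ^ 3) :
    ∃ U : K⟦X⟧, U ^ 2 = L ∧ U ^ 3 = W := by
  by_cases hL : L = 0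
  · refine ⟨0, by simp [hL], ?_⟩
    have h2 : W ^ 2 = 0 := by simp [h, hL]
    have := pow_eq_zero_iff (n := 2) (by norm_num) |>.mp h2
    simp [this]
  · set F := FractionRing K⟦X⟧
    set φ := algebraMap K⟦X⟧ F
    have hinj : Function.Injective φ := IsFractionRing.injective _ _
    have hl : φ L ≠ 0 := fun hc => hL (hinj (by simpa using hc))
    set u : F := φ W / φ L with hu
    have hW2 : φ W ^ 2 = φ L ^ 3 := by rw [← map_pow, ← map_pow, h]
    have hu2 : u ^ 2 = φ L := by
      rw [hu]
      rw [div_pow, div_eq_iff (pow_ne_zero 2 hl)]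
      linear_combination hW2
    have hint : IsIntegral K⟦X⟧ u := by
      refine ⟨Polynomial.X ^ 2 - Polynomial.C L, ?_, ?_⟩
      · apply Polynomial.monic_X_pow_sub_C _ (by norm_num)
      · simp [Polynomial.eval₂_sub, hu2]
        exact sub_self _
    obtain ⟨U, hU⟩ := IsIntegrallyClosed.isIntegral_iff.mp hint
    refine ⟨U, hinj ?_, hinj ?_⟩
    · rw [map_pow, hU, hu2]
    · rw [map_pow, hU]
      rw [show u ^ 3 = u * u ^ 2 by ring, hu2, hu, div_mul_cancel₀ _ hl]

lemma psi_X (pr : Fin 2 × ℕ) :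
    ψ (X pr) = (⇑DQ)^[pr.2] (if pr.1 = 0 then t ^ 2 else t ^ 3) := by
  simp only [ψ, aeval_X]

lemma psi_gen (pr : Fin 2 × ℕ) : ψ (D (X pr)) = DQ (ψ (X pr)) := by
  simp only [D, mkDerivation_X]
  rw [psi_X, psi_X]
  rw [Function.iterate_succ_apply']

lemma psi_fd (i : ℕ) : ψ (fd i) = 0 := by
  have h := comm_iter ψ D DQ (fun c => Derivation.map_algebraMap DQ c) psi_gen i
    (wv 0 ^ 2 - lv 0 ^ 3)
  rw [fd, h]
  have hw : ψ (wv 0) = t ^ 3 := by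
    rw [wv, psi_X]
    norm_num
  have hl : ψ (lv 0) = t ^ 2 := by
    rw [lv, psi_X]
    norm_num
  have hz : ψ (wv 0 ^ 2 - lv 0 ^ 3) = 0 := by
    rw [map_sub, map_pow, map_pow, hw, hl]
    ring
  rw [hz, Function.iterate_fixed (map_zero _)]

end Aux

/-! ### The key lemma -/

section Key

open PowerSeries

/-- If `a : P → k` kills every `fd i`, then it kills the kernel of `ψ`. -/
lemma key {k : Type*} [Field k] [Algebra ℂ k] (a : P →ₐ[ℂ] k) (ha : ∀ i, a (fd i) = 0)
    (p : P) (hp : ψ p = 0) : a p = 0 := by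
  haveI : CharZero k := charZero_of_injective_algebraMap (algebraMap ℂ k).injective
  have hfac : ∀ i : ℕ, (i.factorial : k) ≠ 0 := fun i =>
    Nat.cast_ne_zero.mpr i.factorial_ne_zero
  set L : k⟦X⟧ := PowerSeries.mk fun i => ((i.factorial : k))⁻¹ * a (lv i) with hLdef
  set W : k⟦X⟧ := PowerSeries.mk fun i => ((i.factorial : k))⁻¹ * a (wv i) with hWdef
  set F : Fin 2 × ℕ → k⟦X⟧ :=
    fun pr => (⇑(d⁄dX k))^[pr.2] (if pr.1 = 0 then L else W) with hF
  have h0 : ∀ c : ℂ, d⁄dX k (algebraMap ℂ k⟦X⟧ c) = 0 := fun c => by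
    rw [PowerSeries.algebraMap_apply, derivative_C]
  have hgen : ∀ pr : Fin 2 × ℕ,
      aeval F (D (MvPolynomial.X pr)) = d⁄dX k (aeval F (MvPolynomial.X pr)) := fun pr => by
    simp only [D, mkDerivation_X]
    rw [aeval_X (R := ℂ), aeval_X (R := ℂ), hF]
    simp only [Function.iterate_succ_apply']
  -- constant coefficient of `aeval F` is `a`
  have hconst : ∀ q : P, PowerSeries.constantCoeff (R := k) (aeval F q) = a q := by
    intro q
    have heq : (PowerSeries.constantCoeff (R := k)).comp ((aeval F : P →ₐ[ℂ] k⟦X⟧) : P →+* k⟦X⟧)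
        = (a : P →+* k) := by
      apply MvPolynomial.ringHom_ext
      · intro c
        simp only [RingHom.comp_apply, AlgHom.coe_toRingHom]
        rw [show (C c : P) = algebraMap ℂ P c from rfl, AlgHom.commutes, AlgHom.commutes,
          PowerSeries.algebraMap_apply, PowerSeries.constantCoeff_C]
      · rintro ⟨j, i⟩
        simp only [RingHom.comp_apply, AlgHom.coe_toRingHom]
        rw [aeval_X (R := ℂ), hF]
        simp only []
        rw [const_iter]
        by_cases hj : j = 0
        · rw [if_pos hj, hLdef, coeff_mk, ← mul_assoc, mul_inv_cancel₀ (hfac i), one_mul]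
          subst hj
          rw [lv]
        · rw [if_neg hj, hWdef, coeff_mk, ← mul_assoc, mul_inv_cancel₀ (hfac i), one_mul]
          have hj1 : j = 1 := Fin.eq_one_of_ne_zero j hj
          subst hj1
          rw [wv]
    exact RingHom.congr_fun heq q
  -- `aeval F` of the defining polynomial
  have hTPf : aeval F (wv 0 ^ 2 - lv 0 ^ 3) = W ^ 2 - L ^ 3 := by
    rw [map_sub, map_pow, map_pow, wv, lv, aeval_X (R := ℂ), aeval_X (R := ℂ), hF]
    norm_num
  -- W² = L³
  have hW2L3 : W ^ 2 = L ^ 3 := by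
    rw [← sub_eq_zero]
    ext i
    rw [map_zero]
    have h1 : a (fd i) = PowerSeries.constantCoeff (R := k) ((⇑(d⁄dX k))^[i] (W ^ 2 - L ^ 3)) := by
      rw [← hTPf, ← comm_iter (aeval F) D (d⁄dX k) h0 hgen, fd, hconst]
    rw [ha, const_iter] at h1
    exact ((mul_eq_zero.mp h1.symm).resolve_left (hfac i))
  obtain ⟨U, hU2, hU3⟩ := sq_root L W hW2L3
  set G : ℕ → k⟦X⟧ := fun i => (⇑(d⁄dX k))^[i] U with hG
  have hgenQ : ∀ i : ℕ,
      aeval G (DQ (MvPolynomial.X i)) = d⁄dX k (aeval G (MvPolynomial.X i)) := fun i => by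
    simp only [DQ, mkDerivation_X]
    rw [aeval_X (R := ℂ), aeval_X (R := ℂ), hG]
    simp only [Function.iterate_succ_apply']
  have hTQt2 : aeval G (t ^ 2) = L := by
    rw [map_pow, t, aeval_X (R := ℂ), hG]
    simpa using hU2
  have hTQt3 : aeval G (t ^ 3) = W := by
    rw [map_pow, t, aeval_X (R := ℂ), hG]
    simpa using hU3
  -- a factors through ψ
  have hfactor : a p = PowerSeries.constantCoeff (R := k) (aeval G (ψ p)) := by
    have heq : (a : P →+* k) = (PowerSeries.constantCoeff (R := k)).comp
        (((aeval G : Q →ₐ[ℂ] k⟦X⟧) : Q →+* k⟦X⟧).comp ((ψ : P →ₐ[ℂ] Q) : P →+* Q)) := by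
      apply MvPolynomial.ringHom_ext
      · intro c
        simp only [RingHom.comp_apply, AlgHom.coe_toRingHom]
        rw [show (C c : P) = algebraMap ℂ P c from rfl, AlgHom.commutes, AlgHom.commutes,
          AlgHom.commutes, PowerSeries.algebraMap_apply, PowerSeries.constantCoeff_C]
      · rintro ⟨j, i⟩
        simp only [RingHom.comp_apply, AlgHom.coe_toRingHom]
        rw [psi_X]
        rw [comm_iter (aeval G) DQ (d⁄dX k) h0 hgenQ]
        by_cases hj : j = 0
        · rw [if_pos hj, hTQt2, const_iter, hLdef, coeff_mk, ← mul_assoc,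
            mul_inv_cancel₀ (hfac i), one_mul]
          subst hj
          rw [lv]
        · rw [if_neg hj, hTQt3, const_iter, hWdef, coeff_mk, ← mul_assoc,
            mul_inv_cancel₀ (hfac i), one_mul]
          have hj1 : j = 1 := Fin.eq_one_of_ne_zero j hj
          subst hj1
          rw [wv]
    exact RingHom.congr_fun heq p
  rw [hfactor, hp, map_zero, map_zero]

end Key

theorem ker_ψ_eq_radical :
    RingHom.ker ψ = I.radical ∧ ∀ p : P, ψ p = 0 ↔ ∃ n : ℕ, 1 ≤ n ∧ p ^ n ∈ I := by
  have hIker : I ≤ RingHom.ker ψ := by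
    rw [I, Ideal.span_le]
    rintro x ⟨i, rfl⟩
    exact psi_fd i
  have hmain : RingHom.ker ψ = I.radical := by
    apply le_antisymm
    · rw [Ideal.radical_eq_sInf]
      refine le_sInf ?_
      rintro 𝔭 ⟨hIp, hprime⟩
      intro p hp
      haveI := hprime
      set K := FractionRing (P ⧸ 𝔭)
      let a : P →ₐ[ℂ] K :=
        (IsScalarTower.toAlgHom ℂ (P ⧸ 𝔭) K).comp (Ideal.Quotient.mkₐ ℂ 𝔭)
      have ha : ∀ i, a (fd i) = 0 := fun i => by
        have hm : fd i ∈ 𝔭 := hIp (Ideal.subset_span ⟨i, rfl⟩)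
        show algebraMap (P ⧸ 𝔭) K (Ideal.Quotient.mk 𝔭 (fd i)) = 0
        rw [Ideal.Quotient.eq_zero_iff_mem.mpr hm, map_zero]
      have h0 : a p = 0 := key a ha p hp
      have h1 : algebraMap (P ⧸ 𝔭) K (Ideal.Quotient.mk 𝔭 p)
          = algebraMap (P ⧸ 𝔭) K 0 := by rw [map_zero]; exact h0
      have h2 : Ideal.Quotient.mk 𝔭 p = 0 := IsFractionRing.injective (P ⧸ 𝔭) K h1
      rwa [← Ideal.Quotient.eq_zero_iff_mem]
    · haveI : (RingHom.ker (ψ : P →+* Q)).IsPrime := RingHom.ker_isPrime _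
      exact (Ideal.IsPrime.radical_le_iff this).mpr hIker
  refine ⟨hmain, fun p => ?_⟩
  constructor
  · intro hp
    have hmem : p ∈ I.radical := hmain ▸ (by rwa [RingHom.mem_ker])
    obtain ⟨n, hn⟩ := Ideal.mem_radical_iff.mp hmem
    rcases Nat.eq_zero_or_pos n with h | h
    · refine ⟨1, le_refl _, ?_⟩
      subst h
      rw [pow_zero] at hn
      have hItop : I = ⊤ := (Ideal.eq_top_iff_one I).mpr hn
      rw [hItop, pow_one]
      exact Submodule.mem_top
    · exact ⟨n, h, hn⟩
  · rintro ⟨n, -, hn⟩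
    have hmem : p ∈ I.radical := ⟨n, hn⟩
    rw [← hmain, RingHom.mem_ker] at hmem
    exact hmem
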